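/- Let f : ℝⁿ → ℝⁿ be C¹ on a convex compact set K, let κ, κ' > 0, and suppose that for every matrix D in the interval enclosure [Df(K)] and every unit-slope vector v = (1, y) with ‖y‖_∞ ≤ κ (in coordinates ℝ × ℝ^{n−1}), writing Dv = (w_x, w_y), we have w_x ≠ 0 and ‖w_y/w_x‖_∞ ≤ κ'. Then for any two points p₁, p₂ ∈ K with ‖π_y(p₁ − p₂)‖_∞ < κ|π_x(p₁ − p₂)| one has ‖π_y(f(p₁) − f(p₂))‖_∞ ≤ κ'|π_x(f(p₁) − f(p₂))| and π_x(f(p₁) − f(p₂)) ≠ 0. -/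

import Mathlib

open Matrix in
/-- Cone conditions via interval enclosure of the derivative (`d_x = 1`, sup-norm):
if every matrix `D` in the interval enclosure `[Df(K)]` maps each vector `(1, y)` with
`‖y‖_∞ ≤ κ` to a vector `(w_x, w_y)` with `w_x ≠ 0` and `‖w_y‖_∞ ≤ κ' |w_x|`, then for
`p₁, p₂ ∈ K` with `‖π_y(p₁−p₂)‖_∞ < κ |π_x(p₁−p₂)|` one has
`π_x(f(p₁)−f(p₂)) ≠ 0` and `‖π_y(f(p₁)−f(p₂))‖_∞ ≤ κ' |π_x(f(p₁)−f(p₂))|`. -/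
theorem stmt_16 {m : ℕ} (K : Set (Fin (m + 1) → ℝ)) (hconv : Convex ℝ K)
    (hK : IsCompact K)
    (f : (Fin (m + 1) → ℝ) → (Fin (m + 1) → ℝ))
    (f' : (Fin (m + 1) → ℝ) → Matrix (Fin (m + 1)) (Fin (m + 1)) ℝ)
    (hf'cont : ContinuousOn f' K)
    (hderiv : ∀ z ∈ K, HasFDerivAt f ((f' z).mulVecLin.toContinuousLinearMap) z)
    (κ κ' : ℝ) (hκ : 0 < κ) (hκ' : 0 < κ')
    (hcone : ∀ D : Matrix (Fin (m + 1)) (Fin (m + 1)) ℝ,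
      (∀ i j, D i j ∈ Set.Icc (sInf ((fun z => f' z i j) '' K))
                              (sSup ((fun z => f' z i j) '' K))) →
      ∀ v : Fin (m + 1) → ℝ, v 0 = 1 → (∀ j : Fin m, |v j.succ| ≤ κ) →
        (D.mulVec v) 0 ≠ 0 ∧
        ∀ j : Fin m, |(D.mulVec v) j.succ| ≤ κ' * |(D.mulVec v) 0|)
    (p₁ p₂ : Fin (m + 1) → ℝ) (hp₁ : p₁ ∈ K) (hp₂ : p₂ ∈ K)
    (hx : p₁ 0 ≠ p₂ 0)
    (hy : ∀ j : Fin m, |p₁ j.succ - p₂ j.succ| < κ * |p₁ 0 - p₂ 0|) :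
    f p₁ 0 ≠ f p₂ 0 ∧
    ∀ j : Fin m, |f p₁ j.succ - f p₂ j.succ| ≤ κ' * |f p₁ 0 - f p₂ 0| := by
  classical
  set u : Fin (m + 1) → ℝ := p₁ - p₂ with hu
  -- the path γ t = p₂ + t • u
  set γ : ℝ → (Fin (m + 1) → ℝ) := fun t => p₂ + t • u with hγ
  have hγmem : ∀ t ∈ Set.Icc (0:ℝ) 1, γ t ∈ K := by
    intro t ht
    have := hconv hp₂ hp₁ (by linarith [ht.1, ht.2] : (0:ℝ) ≤ 1 - t) ht.1 (by ring)
    convert this using 1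
    simp only [hγ, hu]
    ext i
    simp [smul_eq_mul]
    ring
  have hγderiv : ∀ t ∈ Set.Icc (0:ℝ) 1,
      ∀ i, HasDerivAt (fun s => f (γ s) i) ((f' (γ t)).mulVec u i) t := by
    intro t ht i
    have hz := hderiv (γ t) (hγmem t ht)
    have hγ' : HasDerivAt γ u t := by
      have : HasDerivAt (fun s : ℝ => s • u) ((1:ℝ) • u) t := (hasDerivAt_id t).smul_const u
      have h2 := this.const_add p₂
      rw [one_smul] at h2
      exact h2
    have hcomp : HasDerivAt (f ∘ γ) ((f' (γ t)).mulVec u) t := by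
      have := hz.comp_hasDerivAt t hγ'
      simpa using this
    exact (hasDerivAt_pi.mp hcomp) i
  -- MVT per component
  have hmvt : ∀ i, ∃ z ∈ K, f p₁ i - f p₂ i = (f' z).mulVec u i := by
    intro i
    have hcont : ContinuousOn (fun s => f (γ s) i) (Set.Icc 0 1) := by
      intro t ht
      exact ((hγderiv t ht i).continuousAt).continuousWithinAt
    obtain ⟨c, hc, hceq⟩ := exists_hasDerivAt_eq_slope (fun s => f (γ s) i)
      (fun t => (f' (γ t)).mulVec u i) (by norm_num : (0:ℝ) < 1) hcont
      (fun t ht => hγderiv t (Set.mem_Icc_of_Ioo ht) i)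
    refine ⟨γ c, hγmem c (Set.mem_Icc_of_Ioo hc), ?_⟩
    have h0 : γ 0 = p₂ := by simp [hγ]
    have h1 : γ 1 = p₁ := by
      ext j; simp [hγ, hu]
    rw [hceq, h0, h1]; ring
  choose z hzK hzeq using hmvt
  set D : Matrix (Fin (m + 1)) (Fin (m + 1)) ℝ := fun i j => f' (z i) i j with hD
  have hDu : ∀ i, D.mulVec u i = f p₁ i - f p₂ i := by
    intro i
    rw [hzeq i]
    simp [Matrix.mulVec, hD, dotProduct]
  have hDmem : ∀ i j, D i j ∈ Set.Icc (sInf ((fun z => f' z i j) '' K))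
      (sSup ((fun z => f' z i j) '' K)) := by
    intro i j
    have hcont : ContinuousOn (fun z => f' z i j) K := by
      show ContinuousOn ((fun M : Matrix (Fin (m+1)) (Fin (m+1)) ℝ => M i j) ∘ f') K
      exact ((continuous_apply j).comp (continuous_apply i)).comp_continuousOn hf'cont
    have hcpt : IsCompact ((fun z => f' z i j) '' K) := hK.image_of_continuousOn hcont
    have hmem : f' (z i) i j ∈ (fun z => f' z i j) '' K := ⟨z i, hzK i, rfl⟩
    exact ⟨csInf_le hcpt.bddBelow hmem, le_csSup hcpt.bddAbove hmem⟩
  -- scaled vector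
  set c : ℝ := p₁ 0 - p₂ 0 with hc
  have hc0 : c ≠ 0 := sub_ne_zero.mpr hx
  set v : Fin (m + 1) → ℝ := fun i => u i / c with hv
  have hv0 : v 0 = 1 := by simp [hv, hu, hc, div_self hc0, sub_ne_zero.mpr hx]
  have hvκ : ∀ j : Fin m, |v j.succ| ≤ κ := by
    intro j
    have := hy j
    rw [hv, abs_div]
    rw [div_le_iff₀ (abs_pos.mpr hc0)]
    exact le_of_lt (by simpa [hu, hc] using this)
  have hDv : ∀ i, D.mulVec v i = (f p₁ i - f p₂ i) / c := by
    intro i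
    have hvu : v = c⁻¹ • u := by
      funext k; simp [hv, smul_eq_mul, div_eq_inv_mul]
    rw [hvu, Matrix.mulVec_smul]
    simp [hDu i, smul_eq_mul, div_eq_inv_mul]
  obtain ⟨hw0, hwj⟩ := hcone D hDmem v hv0 hvκ
  constructor
  · intro heq
    apply hw0
    rw [hDv 0, heq, sub_self, zero_div]
  · intro j
    have := hwj j
    rw [hDv j.succ, hDv 0, abs_div, abs_div] at this
    have hcpos : 0 < |c| := abs_pos.mpr hc0
    rw [div_le_iff₀ hcpos] at this
    calc |f p₁ j.succ - f p₂ j.succ|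
        ≤ κ' * (|f p₁ 0 - f p₂ 0| / |c|) * |c| := this
      _ = κ' * |f p₁ 0 - f p₂ 0| := by field_simp
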